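/- Fix s ≥ 1, P_s = {a_1,…,a_s, c | a_i < c}, with μ the Möbius function of P_s^*. For every n ≥ 1, μ(∅, c^n) = s^{n−1}(s − 1). -/

import Mathlib

/-- The alphabet `P_s = {a_1, …, a_s, c}` with `a_i < c`: `some i` is `a_i`, `none` is `c`. -/
abbrev Letter (s : ℕ) := Option (Fin s)

/-- The generalized subword order on words over `P_s`. -/
def WLE {s : ℕ} (u w : List (Letter s)) : Prop :=
  ∃ w', w'.Sublist w ∧ List.Forall₂ (fun x y => x = y ∨ y = none) u w'

namespace MuCalcAux

variable {s : ℕ}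

/-- Candidate value for `μ(∅, w)`. -/
def f (s : ℕ) : List (Letter s) → ℤ
  | [] => 1
  | none :: w => (if w.head? = some none then (s : ℤ) else (s : ℤ) - 1) * f s w
  | some a :: w => if w.head? = some (some a) then 0 else - f s w

/-- The first letter of `z` exists and is `≤ x`. -/
def hdLE (z : List (Letter s)) (x : Letter s) : Prop :=
  match z with
  | [] => False
  | y :: _ => y = x ∨ x = none

instance (z : List (Letter s)) (x : Letter s) : Decidable (hdLE z x) :=
  match z with
  | [] => isFalse fun h => h
  | y :: _ => inferInstanceAs (Decidable (y = x ∨ x = none))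

/-- Letters below `x`. -/
def below (x : Letter s) : Finset (Letter s) :=
  if x = none then Finset.univ else {x}

lemma mem_below {y x : Letter s} : y ∈ below x ↔ (y = x ∨ x = none) := by
  unfold below
  split
  · next h => subst h; simp
  · next h => simp [h]

/-- The (finite) down-set of `v`. -/
def E : List (Letter s) → Finset (List (Letter s))
  | [] => {[]}
  | x :: v => ((below x ×ˢ E v).image fun p => p.1 :: p.2) ∪ (E v).filter fun z => ¬ hdLE z x

lemma wle_nil_left (z : List (Letter s)) : WLE [] z :=
  ⟨[], List.nil_sublist _, List.Forall₂.nil⟩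

lemma wle_refl (z : List (Letter s)) : WLE z z :=
  ⟨z, List.Sublist.refl _, List.forall₂_same.2 fun _ _ => Or.inl rfl⟩

lemma wle_nil_right {z : List (Letter s)} (h : WLE z []) : z = [] := by
  obtain ⟨w', hs, hf⟩ := h
  rw [List.sublist_nil.mp hs] at hf
  exact List.forall₂_nil_right_iff.mp hf

lemma wle_cons_right {z v : List (Letter s)} (x : Letter s) (h : WLE z v) : WLE z (x :: v) := by
  obtain ⟨w', hsub, hf⟩ := h
  exact ⟨w', hsub.trans (List.sublist_cons_self x v), hf⟩

lemma wle_cons_cons {y x : Letter s} {z v : List (Letter s)} (hy : y = x ∨ x = none)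
    (h : WLE z v) : WLE (y :: z) (x :: v) := by
  obtain ⟨w', hsub, hf⟩ := h
  exact ⟨x :: w', hsub.cons₂ x, List.Forall₂.cons hy hf⟩

lemma wle_tail {y : Letter s} {z v : List (Letter s)} {x : Letter s}
    (h : WLE (y :: z) (x :: v)) : WLE z v := by
  obtain ⟨w', hsub, hf⟩ := h
  cases hf with
  | cons hyb hzw =>
    cases hsub with
    | cons _ h' => exact ⟨_, (List.sublist_cons_self _ _).trans h', hzw⟩
    | cons_cons _ h' => exact ⟨_, h', hzw⟩

lemma wle_cons_not_hd {y : Letter s} {z v : List (Letter s)} {x : Letter s}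
    (h : WLE (y :: z) (x :: v)) (hn : ¬(y = x ∨ x = none)) : WLE (y :: z) v := by
  obtain ⟨w', hsub, hf⟩ := h
  cases hf with
  | cons hyb hzw =>
    cases hsub with
    | cons _ h' => exact ⟨_, h', List.Forall₂.cons hyb hzw⟩
    | cons_cons _ h' => exact absurd hyb hn

lemma mem_E_iff : ∀ (v z : List (Letter s)), z ∈ E v ↔ WLE z v := by
  intro v
  induction v with
  | nil =>
    intro z
    simp only [E, Finset.mem_singleton]
    constructor
    · rintro rfl; exact wle_nil_left []
    · exact wle_nil_right
  | cons x v ih =>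
    intro z
    simp only [E, Finset.mem_union, Finset.mem_image, Finset.mem_filter, Finset.mem_product]
    constructor
    · rintro (⟨⟨y, z'⟩, ⟨hy, hz'⟩, rfl⟩ | ⟨hz, -⟩)
      · exact wle_cons_cons (mem_below.mp hy) ((ih z').mp hz')
      · exact wle_cons_right x ((ih z).mp hz)
    · intro h
      match z with
      | [] => exact Or.inr ⟨(ih []).mpr (wle_nil_left v), fun h => h⟩
      | y :: z' =>
        by_cases hy : y = x ∨ x = none
        · exact Or.inl ⟨(y, z'), ⟨mem_below.mpr hy, (ih z').mpr (wle_tail h)⟩, rfl⟩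
        · exact Or.inr ⟨(ih _).mpr (wle_cons_not_hd h hy), hy⟩

lemma nil_mem_E (v : List (Letter s)) : [] ∈ E v := (mem_E_iff v []).mpr (wle_nil_left v)

lemma sum_letters (z : List (Letter s)) :
    ∑ y : Letter s, f s (y :: z) = if z = [] then -1 else 0 := by
  rw [Fintype.sum_option]
  match z with
  | [] =>
    rw [if_pos rfl]
    have h1 : f s [(none : Letter s)] = (s : ℤ) - 1 := by simp [f]
    have h2 : ∀ i : Fin s, f s [some i] = -1 := fun i => by simp [f]
    rw [h1, Finset.sum_congr rfl fun i _ => h2 i, Finset.sum_const, Finset.card_univ,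
      Fintype.card_fin]
    simp [nsmul_eq_mul]
    ring
  | none :: t =>
    rw [if_neg (by simp)]
    have h1 : f s (none :: none :: t) = (s : ℤ) * f s (none :: t) := by simp [f]
    have h2 : ∀ i : Fin s, f s (some i :: none :: t) = -(f s (none :: t)) :=
      fun i => by simp [f]
    rw [h1, Finset.sum_congr rfl fun i _ => h2 i, Finset.sum_const, Finset.card_univ,
      Fintype.card_fin]
    simp [nsmul_eq_mul]
  | some j :: t =>
    rw [if_neg (by simp)]
    have h1 : f s (none :: some j :: t) = ((s : ℤ) - 1) * f s (some j :: t) := by simp [f]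
    have h2 : ∀ i : Fin s, f s (some i :: some j :: t)
        = if j = i then 0 else -(f s (some j :: t)) := by
      intro i
      by_cases h : j = i
      · subst h; simp [f]
      · simp only [if_neg h]
        simp [f, h]
    rw [h1, Finset.sum_congr rfl fun i _ => h2 i]
    have h3 : ∑ i : Fin s, (if j = i then (0 : ℤ) else -(f s (some j :: t)))
        = -(((s : ℤ) - 1) * f s (some j :: t)) := by
      have h4 : ∀ i : Fin s, (if j = i then (0 : ℤ) else -(f s (some j :: t)))
          = -(f s (some j :: t)) + (if j = i then f s (some j :: t) else 0) := by
        intro i; split <;> ring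
      rw [Finset.sum_congr rfl fun i _ => h4 i, Finset.sum_add_distrib, Finset.sum_const,
        Finset.card_univ, Fintype.card_fin, Finset.sum_ite_eq, if_pos (Finset.mem_univ j)]
      simp [nsmul_eq_mul]
      ring
    rw [h3]
    ring

lemma sum_E (v : List (Letter s)) : ∑ z ∈ E v, f s z = if v = [] then 1 else 0 := by
  cases v with
  | nil => simp [E, f]
  | cons x v =>
    rw [if_neg (List.cons_ne_nil x v)]
    have hdisj : Disjoint ((below x ×ˢ E v).image fun p : Letter s × List (Letter s) => p.1 :: p.2)
        ((E v).filter fun z => ¬ hdLE z x) := by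
      rw [Finset.disjoint_left]
      intro z hz1 hz2
      simp only [Finset.mem_image, Finset.mem_product] at hz1
      obtain ⟨⟨y, z'⟩, ⟨hy, _⟩, rfl⟩ := hz1
      exact (Finset.mem_filter.mp hz2).2 (mem_below.mp hy)
    have hinj : ∀ p ∈ below x ×ˢ E v, ∀ q ∈ below x ×ˢ E v,
        (fun p : Letter s × List (Letter s) => p.1 :: p.2) p
          = (fun p : Letter s × List (Letter s) => p.1 :: p.2) q → p = q := by
      rintro ⟨a, b⟩ - ⟨c, d⟩ - h
      simpa [Prod.ext_iff] using h
    rw [show E (x :: v) = ((below x ×ˢ E v).image fun p : Letter s × List (Letter s) => p.1 :: p.2)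
        ∪ (E v).filter fun z => ¬ hdLE z x from rfl]
    rw [Finset.sum_union hdisj, Finset.sum_image hinj, Finset.sum_product]
    match x with
    | some a =>
      have hb : below (some a : Letter s) = {some a} := if_neg (by simp)
      rw [hb, Finset.sum_singleton]
      have h1 : ∀ z' ∈ E v, f s (some a :: z')
          = if hdLE z' (some a : Letter s) then 0 else - f s z' := by
        intro z' _
        match z' with
        | [] => simp [f, hdLE]
        | y :: t =>
          by_cases h : y = some a
          · subst h; simp [f, hdLE]
          · have : ¬ hdLE (y :: t) (some a : Letter s) := by simp [hdLE, h]
            rw [if_neg this]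
            simp only [f]
            rw [if_neg (by simp [h])]
      rw [Finset.sum_congr rfl h1, Finset.sum_ite]
      simp
    | none =>
      have hb : below (none : Letter s) = Finset.univ := if_pos rfl
      rw [hb, Finset.sum_comm]
      rw [Finset.sum_congr rfl fun z' _ => sum_letters z']
      have h2 : (E v).filter (fun z => ¬ hdLE z (none : Letter s)) = {[]} := by
        ext z
        simp only [Finset.mem_filter, Finset.mem_singleton]
        constructor
        · rintro ⟨-, hz⟩
          match z with
          | [] => rfl
          | y :: t => exact absurd (Or.inr rfl) hz
        · rintro rfl
          exact ⟨nil_mem_E v, fun h => h⟩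
      rw [h2, Finset.sum_singleton, Finset.sum_ite_eq' (E v) ([]) (fun _ => (-1 : ℤ))]
      simp [nil_mem_E v, f]

/-- Measure for well-founded induction on the subword order. -/
def meas (v : List (Letter s)) : ℕ := (v.length + 1) ^ 2 + v.count none

lemma count_le_of_forall₂ {z v : List (Letter s)}
    (h : List.Forall₂ (fun x y => x = y ∨ y = none) z v) :
    z.count none ≤ v.count none := by
  induction h with
  | nil => exact le_refl _
  | @cons x y z' v' hxy h ih =>
    rcases hxy with rfl | rfl
    · by_cases hx : x = (none : Letter s)
      · subst hx
        rw [List.count_cons_self, List.count_cons_self]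
        omega
      · rw [List.count_cons_of_ne hx,
          List.count_cons_of_ne hx]
        exact ih
    · rw [List.count_cons_self]
      by_cases hx : x = (none : Letter s)
      · subst hx
        rw [List.count_cons_self]
        omega
      · rw [List.count_cons_of_ne hx]
        omega

lemma count_lt_of_forall₂ {z v : List (Letter s)}
    (h : List.Forall₂ (fun x y => x = y ∨ y = none) z v) (hne : z ≠ v) :
    z.count none < v.count none := by
  induction h with
  | nil => exact absurd rfl hne
  | @cons x y z' v' hxy h ih =>
    by_cases hxy' : x = y
    · subst hxy'
      have hne' : z' ≠ v' := fun h' => hne (by rw [h'])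
      have hlt := ih hne'
      by_cases hx : x = (none : Letter s)
      · subst hx
        rw [List.count_cons_self, List.count_cons_self]
        omega
      · rw [List.count_cons_of_ne hx,
          List.count_cons_of_ne hx]
        exact hlt
    · rcases hxy with rfl | rfl
      · exact absurd rfl hxy'
      · have hle := count_le_of_forall₂ h
        rw [List.count_cons_of_ne hxy', List.count_cons_self]
        omega

lemma meas_lt {z v : List (Letter s)} (h : WLE z v) (hne : z ≠ v) : meas z < meas v := by
  obtain ⟨w', hsub, hf⟩ := h
  have hlz : z.length = w'.length := hf.length_eq
  have hlw : w'.length ≤ v.length := hsub.length_le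
  have hle : z.length ≤ v.length := hlz ▸ hlw
  rcases lt_or_eq_of_le hle with hlt | heq
  · have h1 : z.count none ≤ z.length := List.count_le_length
    have h2 : v.count none ≥ 0 := Nat.zero_le _
    unfold meas
    nlinarith
  · have hw : w' = v := hsub.eq_of_length (by omega)
    subst hw
    have := count_lt_of_forall₂ hf hne
    unfold meas
    rw [heq]
    omega

end MuCalcAux

open MuCalcAux in
/-- For `n ≥ 1`: `μ(∅, c^n) = s^{n−1}(s−1)`. -/
theorem mu_empty_c_pow (s : ℕ) (hs : 1 ≤ s)
    (μ : List (Letter s) → List (Letter s) → ℤ)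
    (hrefl : ∀ u, μ u u = 1)
    (hnle : ∀ u v, ¬ WLE u v → μ u v = 0)
    (hsum : ∀ u v, WLE u v → u ≠ v → ∑ᶠ z ∈ {z : List (Letter s) | WLE u z ∧ WLE z v}, μ u z = 0)
    (n : ℕ) (hn : 1 ≤ n) :
    μ [] (List.replicate n (none : Letter s)) = (s : ℤ) ^ (n - 1) * ((s : ℤ) - 1) := by
  have key : ∀ N (v : List (Letter s)), meas v < N → μ [] v = f s v := by
    intro N
    induction N with
    | zero => intro v hv; omega
    | succ N ih =>
      intro v hv
      by_cases hv0 : v = []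
      · subst hv0; rw [hrefl]; rfl
      · have h0 := hsum [] v (wle_nil_left v) fun h => hv0 h.symm
        have hset : {z : List (Letter s) | WLE [] z ∧ WLE z v} = ↑(E v) := by
          ext z; simp [mem_E_iff, wle_nil_left]
        rw [hset, finsum_mem_coe_finset] at h0
        have hfe : ∑ z ∈ E v, f s z = 0 := by rw [sum_E, if_neg hv0]
        have hvmem : v ∈ E v := (mem_E_iff v v).mpr (wle_refl v)
        have herase : ∑ z ∈ (E v).erase v, μ [] z = ∑ z ∈ (E v).erase v, f s z := by
          refine Finset.sum_congr rfl fun z hz => ?_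
          have hzv : z ≠ v := (Finset.mem_erase.mp hz).1
          have hzle : WLE z v := (mem_E_iff v z).mp (Finset.mem_erase.mp hz).2
          exact ih z (by have := meas_lt hzle hzv; omega)
        have h1 := Finset.add_sum_erase (E v) (μ []) hvmem
        have h2 := Finset.add_sum_erase (E v) (f s) hvmem
        rw [h0] at h1
        rw [hfe] at h2
        linarith [h1, h2, herase]
  have hrep : ∀ m : ℕ, f s (List.replicate (m + 1) (none : Letter s))
      = (s : ℤ) ^ m * ((s : ℤ) - 1) := by
    intro m
    induction m with
    | zero => simp [List.replicate, f]
    | succ m ih =>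
      rw [List.replicate_succ]
      have step : f s ((none : Letter s) :: List.replicate (m + 1) none)
          = (s : ℤ) * f s (List.replicate (m + 1) none) := by
        have hh : (List.replicate (m + 1) (none : Letter s)).head? = some none := by
          rw [List.replicate_succ]; rfl
        rw [show f s ((none : Letter s) :: List.replicate (m + 1) none)
            = (if (List.replicate (m + 1) (none : Letter s)).head? = some none
                then (s : ℤ) else (s : ℤ) - 1) * f s (List.replicate (m + 1) none) from rfl,
          hh, if_pos rfl]
      rw [step, ih, pow_succ]
      ring
  obtain ⟨m, rfl⟩ : ∃ m, n = m + 1 := ⟨n - 1, by omega⟩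
  rw [key (meas (List.replicate (m + 1) (none : Letter s)) + 1) _ (Nat.lt_succ_self _)]
  rw [hrep m]
  norm_num
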